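/- Let G be a false-twin-free graph and let v be a vertex of degree at least 2. Then v belongs to at least two distinct bicliques of G. -/

import Mathlib

/-- A set of vertices inducing a complete bipartite subgraph (both sides nonempty). -/
def IsCompleteBipartiteSet {V : Type*} (G : SimpleGraph V) (B : Set V) : Prop :=
  ∃ X Y : Set V, X.Nonempty ∧ Y.Nonempty ∧ Disjoint X Y ∧ B = X ∪ Y ∧
    (∀ x ∈ X, ∀ y ∈ Y, G.Adj x y) ∧
    (∀ x ∈ X, ∀ x' ∈ X, ¬ G.Adj x x') ∧
    (∀ y ∈ Y, ∀ y' ∈ Y, ¬ G.Adj y y')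

/-- A biclique: a maximal set of vertices inducing a complete bipartite subgraph. -/
def IsBiclique {V : Type*} (G : SimpleGraph V) (B : Set V) : Prop :=
  IsCompleteBipartiteSet G B ∧
    ∀ B' : Set V, IsCompleteBipartiteSet G B' → B ⊆ B' → B' = B

/-- A vertex set that is a star: a center `c` adjacent to all other vertices of the set,
which are nonempty and pairwise non-adjacent (shape `K_{1,r}`, `r ≥ 1`). -/
def IsStarSet {V : Type*} (G : SimpleGraph V) (B : Set V) : Prop :=
  ∃ c ∈ B, (B \ {c}).Nonempty ∧ (∀ w ∈ B, w ≠ c → G.Adj c w) ∧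
    (∀ w ∈ B, ∀ z ∈ B, w ≠ c → z ≠ c → ¬ G.Adj w z)

/-- A graph is false-twin-free if no two distinct vertices have equal open neighborhoods. -/
def FalseTwinFree {V : Type*} (G : SimpleGraph V) : Prop :=
  ∀ u v : V, G.neighborSet u = G.neighborSet v → u = v

section Aux

variable {V : Type*} {G : SimpleGraph V}

/-- Any complete bipartite set extends to a biclique (finite graphs). -/
lemma exists_biclique_ext [Finite V] {B : Set V} (h : IsCompleteBipartiteSet G B) :
    ∃ C : Set V, IsBiclique G C ∧ B ⊆ C := by
  classical
  set S : Set (Set V) := {C : Set V | IsCompleteBipartiteSet G C ∧ B ⊆ C} with hS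
  have hfin : S.Finite := Set.toFinite _
  obtain ⟨C, ⟨hC, hBC⟩, hmax⟩ :=
    Set.Finite.exists_maximalFor Set.ncard S hfin ⟨B, h, subset_rfl⟩
  refine ⟨C, ⟨hC, ?_⟩, hBC⟩
  intro C' hC' hCC'
  have hC'S : C' ∈ S := ⟨hC', hBC.trans hCC'⟩
  have hle : C.ncard ≤ C'.ncard := Set.ncard_le_ncard hCC' (Set.toFinite _)
  have heq := hmax hC'S hle
  exact (Set.eq_of_subset_of_ncard_le hCC' heq (Set.toFinite _)).symm

lemma cb_pair {u w : V} (h : G.Adj u w) : IsCompleteBipartiteSet G {u, w} := by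
  refine ⟨{u}, {w}, ⟨u, rfl⟩, ⟨w, rfl⟩, ?_, by rw [Set.singleton_union], ?_, ?_, ?_⟩
  · simpa using h.ne
  · intro x hx y hy
    simp only [Set.mem_singleton_iff] at hx hy
    subst hx; subst hy; exact h
  · intro x hx y hy
    simp only [Set.mem_singleton_iff] at hx hy
    subst hx; subst hy; exact G.loopless.irrefl _
  · intro x hx y hy
    simp only [Set.mem_singleton_iff] at hx hy
    subst hx; subst hy; exact G.loopless.irrefl _

lemma cb_triple {c x y : V} (h1 : G.Adj c x) (h2 : G.Adj c y) (hxy : ¬ G.Adj x y) :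
    IsCompleteBipartiteSet G {c, x, y} := by
  refine ⟨{c}, {x, y}, ⟨c, rfl⟩, ⟨x, by simp⟩, ?_, by rw [Set.singleton_union], ?_, ?_, ?_⟩
  · rw [Set.disjoint_singleton_left]
    simp only [Set.mem_insert_iff, Set.mem_singleton_iff]
    push_neg
    exact ⟨h1.ne, h2.ne⟩
  · intro a ha b hb
    simp only [Set.mem_singleton_iff] at ha
    simp only [Set.mem_insert_iff, Set.mem_singleton_iff] at hb
    subst ha
    rcases hb with rfl | rfl
    · exact h1
    · exact h2
  · intro a ha b hb
    simp only [Set.mem_singleton_iff] at ha hb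
    subst ha; subst hb; exact G.loopless.irrefl _
  · intro a ha b hb
    simp only [Set.mem_insert_iff, Set.mem_singleton_iff] at ha hb
    rcases ha with rfl | rfl <;> rcases hb with rfl | rfl
    · exact G.loopless.irrefl _
    · exact hxy
    · exact fun h => hxy h.symm
    · exact G.loopless.irrefl _

/-- One-sided helper: with `v` on side `X` and neighbors `a, b` of `v` in the set,
a vertex adjacent to `a` but not `b` cannot be in the set. -/
lemma aux_not_mem {X Y : Set V}
    (hXY : ∀ x ∈ X, ∀ y ∈ Y, G.Adj x y)
    (hX : ∀ x ∈ X, ∀ x' ∈ X, ¬ G.Adj x x')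
    (hY : ∀ y ∈ Y, ∀ y' ∈ Y, ¬ G.Adj y y')
    {v a b w : V} (hv : v ∈ X) (ha : a ∈ X ∪ Y) (hb : b ∈ X ∪ Y)
    (h1 : G.Adj v a) (h2 : G.Adj v b)
    (hwa : G.Adj w a) (hwb : ¬ G.Adj w b) : w ∉ X ∪ Y := by
  have haY : a ∈ Y := ha.resolve_left fun hh => (hX v hv a hh h1).elim
  have hbY : b ∈ Y := hb.resolve_left fun hh => (hX v hv b hh h2).elim
  rintro (hw | hw)
  · exact hwb (hXY w hw b hbY)
  · exact hY w hw a haY hwa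

lemma cb_not_mem {B : Set V} (h : IsCompleteBipartiteSet G B) {v a b w : V}
    (hv : v ∈ B) (ha : a ∈ B) (hb : b ∈ B)
    (h1 : G.Adj v a) (h2 : G.Adj v b)
    (hwa : G.Adj w a) (hwb : ¬ G.Adj w b) : w ∉ B := by
  obtain ⟨X, Y, -, -, -, hB, hXY, hX, hY⟩ := h
  subst hB
  have hXY' : ∀ x ∈ Y, ∀ y ∈ X, G.Adj x y := fun x hx y hy => (hXY y hy x hx).symm
  rcases hv with hv | hv
  · exact aux_not_mem hXY hX hY hv ha hb h1 h2 hwa hwb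
  · have := aux_not_mem hXY' hY hX hv
      (Set.union_comm X Y ▸ ha) (Set.union_comm X Y ▸ hb) h1 h2 hwa hwb
    rw [Set.union_comm X Y]
    exact this

/-- One-sided helper for non-adjacency of two common neighbors. -/
lemma aux_not_adj {X Y : Set V}
    (hX : ∀ x ∈ X, ∀ x' ∈ X, ¬ G.Adj x x')
    (hY : ∀ y ∈ Y, ∀ y' ∈ Y, ¬ G.Adj y y')
    {v a b : V} (hv : v ∈ X) (ha : a ∈ X ∪ Y) (hb : b ∈ X ∪ Y)
    (h1 : G.Adj v a) (h2 : G.Adj v b) : ¬ G.Adj a b := by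
  have haY : a ∈ Y := ha.resolve_left fun hh => (hX v hv a hh h1).elim
  have hbY : b ∈ Y := hb.resolve_left fun hh => (hX v hv b hh h2).elim
  exact hY a haY b hbY

lemma cb_not_adj {B : Set V} (h : IsCompleteBipartiteSet G B) {v a b : V}
    (hv : v ∈ B) (ha : a ∈ B) (hb : b ∈ B)
    (h1 : G.Adj v a) (h2 : G.Adj v b) : ¬ G.Adj a b := by
  obtain ⟨X, Y, -, -, -, hB, hXY, hX, hY⟩ := h
  subst hB
  rcases hv with hv | hv
  · exact aux_not_adj hX hY hv ha hb h1 h2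
  · exact aux_not_adj hY hX hv
      (Set.union_comm X Y ▸ ha) (Set.union_comm X Y ▸ hb) h1 h2

/-- Helper for the non-adjacent case, given a distinguishing vertex `w`. -/
lemma two_bicliques_aux [Finite V] {v a b w : V}
    (hva : G.Adj v a) (hvb : G.Adj v b) (hab : ¬ G.Adj a b)
    (hw1 : G.Adj a w) (hw2 : ¬ G.Adj b w) :
    ∃ B₁ B₂ : Set V, B₁ ≠ B₂ ∧ IsBiclique G B₁ ∧ IsBiclique G B₂ ∧
      v ∈ B₁ ∧ v ∈ B₂ := by
  obtain ⟨B₁, hB₁, hs₁⟩ := exists_biclique_ext (cb_triple hva hvb hab)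
  have hvB₁ : v ∈ B₁ := hs₁ (by simp)
  have haB₁ : a ∈ B₁ := hs₁ (by simp)
  have hbB₁ : b ∈ B₁ := hs₁ (by simp)
  have hwB₁ : w ∉ B₁ :=
    cb_not_mem hB₁.1 hvB₁ haB₁ hbB₁ hva hvb hw1.symm (fun h => hw2 h.symm)
  by_cases hvw : G.Adj v w
  · obtain ⟨B₂, hB₂, hs₂⟩ := exists_biclique_ext (cb_pair hvw)
    refine ⟨B₁, B₂, ?_, hB₁, hB₂, hvB₁, hs₂ (by simp)⟩
    intro hEq
    exact hwB₁ (hEq ▸ hs₂ (by simp))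
  · obtain ⟨B₂, hB₂, hs₂⟩ := exists_biclique_ext (cb_triple hva.symm hw1 hvw)
    refine ⟨B₁, B₂, ?_, hB₁, hB₂, hvB₁, hs₂ (by simp)⟩
    intro hEq
    exact hwB₁ (hEq ▸ hs₂ (by simp))

end Aux

/-- In a false-twin-free graph, a vertex of degree at least 2 belongs to at least
two distinct bicliques. -/
theorem two_bicliques_of_degree_two {V : Type*} [Fintype V] (G : SimpleGraph V)
    [DecidableRel G.Adj] (htf : FalseTwinFree G) (v : V) (hdeg : 2 ≤ G.degree v) :
    ∃ B₁ B₂ : Set V, B₁ ≠ B₂ ∧ IsBiclique G B₁ ∧ IsBiclique G B₂ ∧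
      v ∈ B₁ ∧ v ∈ B₂ := by
  classical
  have hcard : 1 < (G.neighborFinset v).card := hdeg
  obtain ⟨a, ha, b, hb, hab⟩ := Finset.one_lt_card.mp hcard
  rw [SimpleGraph.mem_neighborFinset] at ha hb
  by_cases hadj : G.Adj a b
  · obtain ⟨B₁, hB₁, hs₁⟩ := exists_biclique_ext (cb_pair ha)
    obtain ⟨B₂, hB₂, hs₂⟩ := exists_biclique_ext (cb_pair hb)
    refine ⟨B₁, B₂, ?_, hB₁, hB₂, hs₁ (by simp), hs₂ (by simp)⟩
    intro hEq
    exact cb_not_adj hB₁.1 (hs₁ (by simp)) (hs₁ (by simp))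
      (hEq ▸ hs₂ (by simp)) ha hb hadj
  · have hNS : G.neighborSet a ≠ G.neighborSet b := fun h => hab (htf a b h)
    have hex : ∃ w, (G.Adj a w ∧ ¬ G.Adj b w) ∨ (G.Adj b w ∧ ¬ G.Adj a w) := by
      by_contra hc
      push_neg at hc
      apply hNS
      ext w
      have := hc w
      simp only [SimpleGraph.mem_neighborSet]
      tauto
    obtain ⟨w, hw | hw⟩ := hex
    · exact two_bicliques_aux ha hb hadj hw.1 hw.2
    · exact two_bicliques_aux hb ha (fun h => hadj h.symm) hw.1 hw.2
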